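/- Monotonicity of the principal eigenvalue in β: if 0 < γ < β < 1/2, then A_β ⊆ A_γ; consequently λ₁(γ) ≥ λ₁(β), i.e., β ↦ λ₁(β) = sup A_β is non-increasing on (0,1/2). -/

import Mathlib

open Filter Finset Topology

/-- The weight `p_β`: `1` if `β = 0`, and `β/(1-β)` otherwise. -/
noncomputable def pB (β : ℝ) : ℝ := if β = 0 then 1 else β / (1 - β)

/-- Vertices of the regular `m`-branching tree are finite sequences over `Fin m`
(the root is `[]`, the successors of `x` are `i :: x`, the predecessor of `a :: t` is `t`,
and the level `|x|` is the list length).  The `β`-Laplacian on the tree. -/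
noncomputable def lapB (m : ℕ) (β : ℝ) (u : List (Fin m) → ℝ) : List (Fin m) → ℝ
  | [] => (∑ i : Fin m, u [i]) / m - u []
  | a :: t =>
      (β * u t + (1 - β) * (∑ i : Fin m, u (i :: a :: t)) / m - u (a :: t)) *
        pB β ^ (-((a :: t).length : ℤ))

/-- A branch: an infinite path starting at the root, following successors. -/
def IsBranch (m : ℕ) (b : ℕ → List (Fin m)) : Prop :=
  b 0 = [] ∧ ∀ n, ∃ i : Fin m, b (n + 1) = i :: b n

/-- Homogeneous Dirichlet boundary condition: `u → 0` along every branch. -/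
def ZeroOnBoundary (m : ℕ) (u : List (Fin m) → ℝ) : Prop :=
  ∀ b : ℕ → List (Fin m), IsBranch m b → Tendsto (fun n => u (b n)) atTop (𝓝 0)

/-- `lam` is a principal eigenvalue of `Δ_β`: it is positive and admits a bounded
nonnegative nontrivial eigenfunction vanishing on the boundary. -/
def IsPrincipalEigenvalue (m : ℕ) (β lam : ℝ) : Prop :=
  0 < lam ∧ ∃ u : List (Fin m) → ℝ,
    (∃ M, ∀ x, |u x| ≤ M) ∧ (∀ x, 0 ≤ u x) ∧ u ≠ 0 ∧
    (∀ x, -lapB m β u x = lam * u x) ∧ ZeroOnBoundary m u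

/-- Membership in the set `A_β`. -/
def memA (m : ℕ) (β lam : ℝ) : Prop :=
  0 < lam ∧ ∃ v : List (Fin m) → ℝ, ∃ c C : ℝ, 0 < c ∧
    (∀ x, c < v x ∧ v x < C) ∧ ∀ x, lapB m β v x + lam * v x ≤ 0

/-- `λ₁(β) = sup A_β`. -/
noncomputable def lam1 (m : ℕ) (β : ℝ) : ℝ := sSup {lam | memA m β lam}

/-- Summation over level `n+1` of the tree, split as successor of level `n`. -/
lemma sum_ofFn_succ {m n : ℕ} (F : List (Fin m) → ℝ) :
    ∑ h : Fin (n+1) → Fin m, F (List.ofFn h)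
      = ∑ a : Fin m, ∑ g : Fin n → Fin m, F (a :: List.ofFn g) := by
  calc ∑ h : Fin (n+1) → Fin m, F (List.ofFn h)
      = ∑ p : Fin m × (Fin n → Fin m), F (p.1 :: List.ofFn p.2) := by
        refine Fintype.sum_equiv (Fin.consEquiv (fun _ : Fin (n+1) => Fin m)).symm _ _ ?_
        intro h
        rw [List.ofFn_succ]
        rfl
    _ = ∑ a : Fin m, ∑ g : Fin n → Fin m, F (a :: List.ofFn g) :=
        Fintype.sum_prod_type _

lemma pB_pos {β : ℝ} (h0 : 0 < β) (h1 : β < 1) : 0 < pB β := by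
  rw [pB, if_neg h0.ne']
  exact div_pos h0 (by linarith)

lemma pB_mono {γ β : ℝ} (h0 : 0 < γ) (hgb : γ ≤ β) (h1 : β < 1) : pB γ ≤ pB β := by
  have hb0 : (0:ℝ) < β := lt_of_lt_of_le h0 hgb
  rw [pB, pB, if_neg h0.ne', if_neg hb0.ne']
  rw [div_le_div_iff₀ (by linarith) (by linarith)]
  nlinarith

lemma memA_lt_one {m : ℕ} (hm : 2 ≤ m) {β lam : ℝ} (h : memA m β lam) : lam < 1 := by
  obtain ⟨hl, v, c, C, hc, hb, hi⟩ := h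
  have h0 := hi []
  have hroot : lapB m β v [] = (∑ i : Fin m, v [i]) / m - v [] := rfl
  rw [hroot] at h0
  have hmpos : (0:ℝ) < m := by positivity
  have hsum : 0 < ∑ i : Fin m, v [i] := by
    have : Nonempty (Fin m) := ⟨⟨0, by omega⟩⟩
    exact Finset.sum_pos (fun i _ => lt_trans hc (hb _).1) Finset.univ_nonempty
  have hvpos : 0 < v [] := lt_trans hc (hb _).1
  have hdiv : 0 < (∑ i : Fin m, v [i]) / m := div_pos hsum hmpos
  nlinarith

set_option maxHeartbeats 1600000 in
lemma memA_anti {m : ℕ} (hm : 2 ≤ m) {γ β lam : ℝ}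
    (hγ : 0 < γ) (hγβ : γ < β) (hβ : β < 1 / 2) (h : memA m β lam) : memA m γ lam := by
  obtain ⟨hl, v, c, C, hc, hb, hi⟩ := h
  have hβ0 : 0 < β := lt_trans hγ hγβ
  have hmpos : (0:ℝ) < m := by positivity
  have hm0 : (m:ℝ) ≠ 0 := hmpos.ne'
  have hne : Nonempty (Fin m) := ⟨⟨0, by omega⟩⟩
  have hP : 0 < pB β := pB_pos hβ0 (by linarith)
  have hPg : 0 < pB γ := pB_pos hγ (by linarith)
  have hPP : pB γ ≤ pB β := pB_mono hγ hγβ.le (by linarith)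
  -- level sums and averages
  obtain ⟨S, hS'⟩ : ∃ S : ℕ → ℝ, ∀ k, S k = ∑ g : Fin k → Fin m, v (List.ofFn g) :=
    ⟨_, fun _ => rfl⟩
  obtain ⟨f, hf'⟩ : ∃ f : ℕ → ℝ, ∀ k, f k = S k / (m:ℝ) ^ k := ⟨_, fun _ => rfl⟩
  -- bounds on f
  have hfb : ∀ k, c < f k ∧ f k < C := by
    intro k
    have hcard : Fintype.card (Fin k → Fin m) = m ^ k := by simp
    have hpow : (0:ℝ) < (m:ℝ) ^ k := by positivity
    constructor
    · rw [hf', lt_div_iff₀ hpow]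
      calc c * (m:ℝ)^k = ∑ _g : Fin k → Fin m, c := by
            rw [Finset.sum_const, Finset.card_univ, hcard, nsmul_eq_mul]
            push_cast; ring
        _ < S k := by
            rw [hS']
            exact Finset.sum_lt_sum_of_nonempty Finset.univ_nonempty (fun g _ => (hb _).1)
    · rw [hf', div_lt_iff₀ hpow]
      calc S k < ∑ _g : Fin k → Fin m, C := by
            rw [hS']
            exact Finset.sum_lt_sum_of_nonempty Finset.univ_nonempty (fun g _ => (hb _).2)
        _ = C * (m:ℝ)^k := by
            rw [Finset.sum_const, Finset.card_univ, hcard, nsmul_eq_mul]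
            push_cast; ring
  -- root inequality for f
  have hf0 : f 0 = v [] := by
    rw [hf', hS']
    simp
  have hS1 : S 1 = ∑ i : Fin m, v [i] := by
    rw [hS']
    have := sum_ofFn_succ (m := m) (n := 0) v
    simpa using this
  have hf1 : f 1 = (∑ i : Fin m, v [i]) / m := by
    rw [hf', hS1, pow_one]
  have root : f 1 - f 0 + lam * f 0 ≤ 0 := by
    have h0 := hi []
    have hroot : lapB m β v [] = (∑ i : Fin m, v [i]) / m - v [] := rfl
    rw [hroot] at h0
    rw [hf0, hf1]; linarith
  -- averaged interior inequality for f
  have key : ∀ n : ℕ, (β * f n + (1 - β) * f (n+2) - f (n+1)) * (pB β ^ (n+1))⁻¹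
      + lam * f (n+1) ≤ 0 := by
    intro n
    set Q : ℝ := (pB β ^ (n+1))⁻¹ with hQdef
    have hQ : 0 < Q := by positivity
    have hineq : ∑ a : Fin m, ∑ g : Fin n → Fin m,
        ((β * v (List.ofFn g) + (1 - β) * (∑ i : Fin m, v (i :: a :: List.ofFn g)) / m
          - v (a :: List.ofFn g)) * Q + lam * v (a :: List.ofFn g)) ≤ 0 := by
      apply Finset.sum_nonpos; intro a _
      apply Finset.sum_nonpos; intro g _
      have h1 := hi (a :: List.ofFn g)
      have hlap : lapB m β v (a :: List.ofFn g)
          = (β * v (List.ofFn g) + (1 - β) * (∑ i : Fin m, v (i :: a :: List.ofFn g)) / m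
            - v (a :: List.ofFn g)) * pB β ^ (-(((a :: List.ofFn g).length : ℤ))) := rfl
      rw [hlap] at h1
      have hlen : ((a :: List.ofFn g).length : ℤ) = ((n+1 : ℕ) : ℤ) := by simp
      rw [hlen, zpow_neg, zpow_natCast] at h1
      exact h1
    have e1 : ∑ _a : Fin m, ∑ g : Fin n → Fin m, v (List.ofFn g) = (m:ℝ) * S n := by
      rw [Finset.sum_const, Finset.card_univ, Fintype.card_fin, nsmul_eq_mul, hS']
    have e2 : ∑ a : Fin m, ∑ g : Fin n → Fin m, v (a :: List.ofFn g) = S (n+1) := by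
      rw [hS']
      exact (sum_ofFn_succ v).symm
    have e3 : ∑ a : Fin m, ∑ g : Fin n → Fin m, ∑ i : Fin m, v (i :: a :: List.ofFn g)
        = S (n+2) := by
      rw [hS']
      have h1 : (∑ h : Fin (n+2) → Fin m, v (List.ofFn h))
          = ∑ i : Fin m, ∑ h : Fin (n+1) → Fin m, v (i :: List.ofFn h) :=
        sum_ofFn_succ (n := n+1) v
      have h2 : ∀ i : Fin m, ∑ h : Fin (n+1) → Fin m, v (i :: List.ofFn h)
          = ∑ a : Fin m, ∑ g : Fin n → Fin m, v (i :: a :: List.ofFn g) := fun i =>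
        sum_ofFn_succ (fun l => v (i :: l))
      rw [h1, Finset.sum_congr rfl (fun i _ => h2 i)]
      exact (Finset.sum_congr rfl (fun a _ => Finset.sum_comm)).trans Finset.sum_comm
    have step : ∀ (a : Fin m) (g : Fin n → Fin m),
        (β * v (List.ofFn g) + (1 - β) * (∑ i : Fin m, v (i :: a :: List.ofFn g)) / m
          - v (a :: List.ofFn g)) * Q + lam * v (a :: List.ofFn g)
        = (β * Q) * v (List.ofFn g)
          + ((1 - β) / m * Q) * (∑ i : Fin m, v (i :: a :: List.ofFn g))
          - Q * v (a :: List.ofFn g) + lam * v (a :: List.ofFn g) := by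
      intro a g; ring
    simp only [step] at hineq
    simp only [Finset.sum_add_distrib, Finset.sum_sub_distrib, ← Finset.mul_sum] at hineq
    rw [e1, e2, e3] at hineq
    have hpowpos : (0:ℝ) < (m:ℝ) ^ (n+1) := by positivity
    have hEq : (β * Q) * ((m:ℝ) * S n) + ((1 - β) / m * Q) * S (n+2) - Q * S (n+1)
          + lam * S (n+1)
        = (m:ℝ)^(n+1) * ((β * f n + (1 - β) * f (n+2) - f (n+1)) * Q + lam * f (n+1)) := by
      simp only [hf']
      field_simp
      ring
    rw [hEq] at hineq
    by_contra hcon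
    push_neg at hcon
    nlinarith
  -- monotonicity: f is strictly decreasing
  have hmono : ∀ n, f (n+1) < f n := by
    intro n
    induction n with
    | zero =>
      have h0 : 0 < f 0 := lt_trans hc (hfb 0).1
      nlinarith [root]
    | succ k ih =>
      have hk := key k
      have hfpos : 0 < f (k+1) := lt_trans hc (hfb (k+1)).1
      have hQ : 0 < (pB β ^ (k+1))⁻¹ := by positivity
      have hE : β * f k + (1 - β) * f (k+2) - f (k+1) < 0 := by
        by_contra hcon
        push_neg at hcon
        nlinarith
      nlinarith
  -- conclusion: w x := f x.length works for γ
  refine ⟨hl, fun x => f x.length, c, C, hc, fun x => hfb x.length, ?_⟩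
  intro x
  match x with
  | [] =>
    have hroot : lapB m γ (fun x => f x.length) [] = (∑ _i : Fin m, f 1) / m - f 0 := rfl
    rw [hroot]
    have hsum : (∑ _i : Fin m, f 1) / (m:ℝ) = f 1 := by
      rw [Finset.sum_const, Finset.card_univ, Fintype.card_fin, nsmul_eq_mul,
        mul_div_cancel_left₀ _ hm0]
    rw [hsum]
    exact root
  | a :: t =>
    have hlap : lapB m γ (fun x => f x.length) (a :: t)
        = (γ * f t.length + (1 - γ) * (∑ _i : Fin m, f (t.length+2)) / m - f (t.length+1)) *
          pB γ ^ (-(((t.length+1 : ℕ)) : ℤ)) := rfl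
    rw [hlap]
    show _ + lam * f (t.length + 1) ≤ 0
    generalize t.length = n
    rw [zpow_neg, zpow_natCast]
    have hsum : (∑ _i : Fin m, f (n+2)) = (m:ℝ) * f (n+2) := by
      rw [Finset.sum_const, Finset.card_univ, Fintype.card_fin, nsmul_eq_mul]
    rw [hsum]
    have hsum2 : (1 - γ) * ((m:ℝ) * f (n+2)) / m = (1 - γ) * f (n+2) := by
      field_simp
    rw [hsum2]
    have hfpos : 0 < f (n+1) := lt_trans hc (hfb (n+1)).1
    have hdec2 : f (n+2) < f n := lt_trans (hmono (n+1)) (hmono n)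
    have hk := key n
    have hPk : (0:ℝ) < pB β ^ (n+1) := by positivity
    have hPgk : (0:ℝ) < pB γ ^ (n+1) := by positivity
    have h2 : β * f n + (1 - β) * f (n+2) - f (n+1)
        ≤ -(lam * f (n+1)) * pB β ^ (n+1) := by
      have hk' : (β * f n + (1 - β) * f (n+2) - f (n+1)) * (pB β ^ (n+1))⁻¹
          ≤ -(lam * f (n+1)) := by linarith
      calc β * f n + (1 - β) * f (n+2) - f (n+1)
          = (β * f n + (1 - β) * f (n+2) - f (n+1)) * (pB β ^ (n+1))⁻¹ * pB β ^ (n+1) := by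
            field_simp
        _ ≤ -(lam * f (n+1)) * pB β ^ (n+1) := mul_le_mul_of_nonneg_right hk' hPk.le
    have h3 : γ * f n + (1 - γ) * f (n+2) - f (n+1)
        ≤ β * f n + (1 - β) * f (n+2) - f (n+1) := by nlinarith
    have hK : 1 ≤ pB β ^ (n+1) / pB γ ^ (n+1) := by
      rw [← div_pow]
      exact one_le_pow₀ ((one_le_div hPg).mpr hPP)
    have h5 : -(lam * f (n+1)) * pB β ^ (n+1) / pB γ ^ (n+1) ≤ -(lam * f (n+1)) := by
      have hneg : -(lam * f (n+1)) < 0 := by nlinarith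
      have heq : -(lam * f (n+1)) * pB β ^ (n+1) / pB γ ^ (n+1)
          = -(lam * f (n+1)) * (pB β ^ (n+1) / pB γ ^ (n+1)) := by ring
      rw [heq]
      nlinarith
    have h4 : (γ * f n + (1 - γ) * f (n+2) - f (n+1)) / pB γ ^ (n+1)
        ≤ -(lam * f (n+1)) * pB β ^ (n+1) / pB γ ^ (n+1) :=
      (div_le_div_iff_of_pos_right hPgk).mpr (h3.trans h2)
    have hfinal : (γ * f n + (1 - γ) * f (n+2) - f (n+1)) * (pB γ ^ (n+1))⁻¹
        ≤ -(lam * f (n+1)) := by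
      rw [← div_eq_mul_inv]
      linarith
    linarith

theorem stmt12 (m : ℕ) (hm : 2 ≤ m) (γ β : ℝ)
    (hγ : 0 < γ) (hγβ : γ < β) (hβ : β < 1 / 2) :
    {lam : ℝ | memA m β lam} ⊆ {lam : ℝ | memA m γ lam} ∧
    lam1 m β ≤ lam1 m γ := by
  have hsub : {lam : ℝ | memA m β lam} ⊆ {lam : ℝ | memA m γ lam} :=
    fun lam hlam => memA_anti hm hγ hγβ hβ hlam
  refine ⟨hsub, ?_⟩
  have hbdd : BddAbove {lam : ℝ | memA m γ lam} :=
    ⟨1, fun x hx => (memA_lt_one hm hx).le⟩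
  by_cases hne : {lam : ℝ | memA m β lam}.Nonempty
  · exact csSup_le_csSup hbdd hne hsub
  · rw [Set.not_nonempty_iff_eq_empty] at hne
    rw [lam1, lam1, hne, Real.sSup_empty]
    by_cases hg : {lam : ℝ | memA m γ lam}.Nonempty
    · obtain ⟨x, hx⟩ := hg
      have h1 := le_csSup hbdd hx
      have hx0 : 0 < x := hx.1
      linarith
    · rw [Set.not_nonempty_iff_eq_empty] at hg
      rw [hg, Real.sSup_empty]
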